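/- arXiv:1011.3424 — 4 statements merged into one kernel-verified Lean document; each statement's English description precedes it below -/
import Mathlib

section
/- If the set of integers ℤ is diophantine (existentially definable) in ℚ in the language of rings, then ℤ is also universally definable in ℚ, i.e., definable by a first-order formula of the form ∀y₁...∀yₙ φ(t, y₁,...,yₙ) with φ quantifier-free. -/
open FirstOrder Language

noncomputable instance : FirstOrder.Ring.CompatibleRing ℚ := FirstOrder.Ring.compatibleRingOfRing ℚ

/-- Realization of `castLE` of a quantifier-free formula. -/
theorem BoundedFormula.realize_castLE_of_isQF {L : Language} {M : Type*} [L.Structure M]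
    {α : Type*} {m n : ℕ} (h : m ≤ n) {φ : L.BoundedFormula α m} (hφ : φ.IsQF)
    (v : α → M) (xs : Fin n → M) :
    (φ.castLE h).Realize v xs ↔ φ.Realize v (xs ∘ Fin.castLE h) := by
  induction hφ with
  | falsum => rfl
  | of_isAtomic hA =>
    induction hA with
    | equal t₁ t₂ =>
      simp only [Term.bdEqual, BoundedFormula.castLE, BoundedFormula.Realize, Term.realize_relabel,
        Sum.elim_comp_map, Function.comp_id]
    | rel R ts =>
      simp only [Relations.boundedFormula, BoundedFormula.castLE, BoundedFormula.Realize, Function.comp,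
        Term.realize_relabel, Sum.elim_comp_map, Function.comp_id]
  | imp h₁ h₂ ih₁ ih₂ =>
    simp only [BoundedFormula.castLE, BoundedFormula.Realize, ih₁, ih₂]

/-- The key arithmetic fact: `t` is an integer iff there is no presentation
`m = t * n` with `m, n` coprime integers and `n ∉ {0, 1, -1}`. -/
theorem int_key (t : ℚ) :
    (∃ z : ℤ, (z : ℚ) = t) ↔
      ¬ ∃ m n a b : ℚ, (∃ z : ℤ, (z : ℚ) = m) ∧ (∃ z : ℤ, (z : ℚ) = n) ∧
        (∃ z : ℤ, (z : ℚ) = a) ∧ (∃ z : ℤ, (z : ℚ) = b) ∧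
        a * m + b * n = 1 ∧ m = t * n ∧ n ≠ 0 ∧ n ≠ 1 ∧ n ≠ -1 := by
  constructor
  · rintro ⟨z, rfl⟩ ⟨m, n, a, b, ⟨M, rfl⟩, ⟨N, rfl⟩, ⟨A, rfl⟩, ⟨B, rfl⟩, h1, h2, h3, h4, h5⟩
    have h1' : A * M + B * N = 1 := by exact_mod_cast h1
    have h2' : M = z * N := by exact_mod_cast h2
    have hNu : N * (A * z + B) = 1 := by rw [h2'] at h1'; linear_combination h1'
    rcases Int.isUnit_iff.mp (IsUnit.of_mul_eq_one (a := N) _ hNu) with h | h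
    · exact h4 (by rw [h]; norm_num)
    · exact h5 (by rw [h]; norm_num)
  · intro h
    by_contra hz
    apply h
    have hden : t.den ≠ 1 := by
      intro hd
      exact hz ⟨t.num, (Rat.den_eq_one_iff t).mp hd⟩
    have hden0 : (t.den : ℤ) ≠ 0 := by exact_mod_cast t.den_nz
    have hcop : IsCoprime (t.num) (t.den : ℤ) := by
      rw [Int.isCoprime_iff_gcd_eq_one]
      simpa [Int.gcd] using t.reduced
    obtain ⟨a, b, hab⟩ := hcop
    refine ⟨(t.num : ℚ), (t.den : ℚ), (a : ℚ), (b : ℚ), ⟨t.num, rfl⟩,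
      ⟨(t.den : ℤ), by push_cast; ring⟩, ⟨a, rfl⟩, ⟨b, rfl⟩, ?_, ?_, ?_, ?_, ?_⟩
    · exact_mod_cast hab
    · have hd : ((t.den : ℚ)) ≠ 0 := by exact_mod_cast t.den_nz
      rw [← div_eq_iff hd]
      exact Rat.num_div_den t
    · exact_mod_cast t.den_nz
    · exact_mod_cast hden
    · intro hcon
      have h0 : (0 : ℚ) ≤ (t.den : ℚ) := by positivity
      rw [hcon] at h0; norm_num at h0

/-- Auxiliary function: assemble a variable assignment on `Fin (4 + 4 * k)` from
four values and four blocks of witnesses. -/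
def mkAssign {k : ℕ} (m n a b : ℚ) (w0 w1 w2 w3 : Fin k → ℚ) : Fin (4 + 4 * k) → ℚ :=
  fun j =>
    if h0 : (j : ℕ) = 0 then m
    else if h1 : (j : ℕ) = 1 then n
    else if h2 : (j : ℕ) = 2 then a
    else if h3 : (j : ℕ) = 3 then b
    else if h4 : (j : ℕ) < 4 + k then w0 ⟨(j : ℕ) - 4, by omega⟩
    else if h5 : (j : ℕ) < 4 + 2 * k then w1 ⟨(j : ℕ) - (4 + k), by omega⟩
    else if h6 : (j : ℕ) < 4 + 3 * k then w2 ⟨(j : ℕ) - (4 + 2 * k), by omega⟩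
    else w3 ⟨(j : ℕ) - (4 + 3 * k), by have := j.isLt; omega⟩

set_option maxHeartbeats 2000000 in
/-- If ℤ is existentially definable in ℚ in the language of rings, then ℤ is
universally definable in ℚ. -/
theorem int_universally_definable_of_existentially_definable
    (hex : ∃ (n : ℕ) (ψ : Language.ring.BoundedFormula (Fin 1) n), ψ.IsQF ∧
      ∀ t : ℚ, (∃ m : ℤ, (m : ℚ) = t) ↔ ψ.exs.Realize (fun _ => t)) :
    ∃ (n : ℕ) (ψ : Language.ring.BoundedFormula (Fin 1) n), ψ.IsQF ∧
      ∀ t : ℚ, (∃ m : ℤ, (m : ℚ) = t) ↔ ψ.alls.Realize (fun _ => t) := by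
  obtain ⟨k, ψ, hQF, hψ⟩ := hex
  have hInt : ∀ c : ℚ, (∃ z : ℤ, (z : ℚ) = c) ↔ ∃ w : Fin k → ℚ, ψ.Realize (fun _ => c) w :=
    fun c => (hψ c).trans BoundedFormula.realize_exs
  -- the four relabeled copies of ψ
  have h0 : 4 + k ≤ 4 + 4 * k := by omega
  have h1 : (4 + k) + k ≤ 4 + 4 * k := by omega
  have h2 : (4 + 2 * k) + k ≤ 4 + 4 * k := by omega
  have h3 : (4 + 3 * k) + k ≤ 4 + 4 * k := by omega
  let φ0 : Language.ring.BoundedFormula (Fin 1) (4 + 4 * k) :=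
    (ψ.relabel (fun _ => Sum.inr (⟨0, by omega⟩ : Fin 4))).castLE h0
  let φ1 : Language.ring.BoundedFormula (Fin 1) (4 + 4 * k) :=
    (ψ.relabel (fun _ => Sum.inr (⟨1, by omega⟩ : Fin (4 + k)))).castLE h1
  let φ2 : Language.ring.BoundedFormula (Fin 1) (4 + 4 * k) :=
    (ψ.relabel (fun _ => Sum.inr (⟨2, by omega⟩ : Fin (4 + 2 * k)))).castLE h2
  let φ3 : Language.ring.BoundedFormula (Fin 1) (4 + 4 * k) :=
    (ψ.relabel (fun _ => Sum.inr (⟨3, by omega⟩ : Fin (4 + 3 * k)))).castLE h3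
  -- the polynomial conditions
  let tv : Language.ring.Term (Fin 1 ⊕ Fin (4 + 4 * k)) := Term.var (Sum.inl 0)
  let mv : Language.ring.Term (Fin 1 ⊕ Fin (4 + 4 * k)) := Term.var (Sum.inr ⟨0, by omega⟩)
  let nv : Language.ring.Term (Fin 1 ⊕ Fin (4 + 4 * k)) := Term.var (Sum.inr ⟨1, by omega⟩)
  let av : Language.ring.Term (Fin 1 ⊕ Fin (4 + 4 * k)) := Term.var (Sum.inr ⟨2, by omega⟩)
  let bv : Language.ring.Term (Fin 1 ⊕ Fin (4 + 4 * k)) := Term.var (Sum.inr ⟨3, by omega⟩)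
  let θ : Language.ring.BoundedFormula (Fin 1) (4 + 4 * k) :=
    ((av * mv + bv * nv) =' 1) ⊓ ((mv =' (tv * nv)) ⊓
      (((nv =' 0).not) ⊓ (((nv =' 1).not) ⊓ ((nv =' (-1)).not))))
  refine ⟨4 + 4 * k, (φ0 ⊓ (φ1 ⊓ (φ2 ⊓ (φ3 ⊓ θ)))).not, ?_, ?_⟩
  · have hq0 : φ0.IsQF := (hQF.relabel _).castLE
    have hq1 : φ1.IsQF := (hQF.relabel _).castLE
    have hq2 : φ2.IsQF := (hQF.relabel _).castLE
    have hq3 : φ3.IsQF := (hQF.relabel _).castLE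
    have hqθ : θ.IsQF := by
      unfold θ
      exact
      ((BoundedFormula.IsAtomic.equal _ _).isQF).inf
        (((BoundedFormula.IsAtomic.equal _ _).isQF).inf
          ((((BoundedFormula.IsAtomic.equal _ _).isQF).not).inf
            (((((BoundedFormula.IsAtomic.equal _ _).isQF).not)).inf
              ((((BoundedFormula.IsAtomic.equal _ _).isQF).not)))))
    exact (hq0.inf (hq1.inf (hq2.inf (hq3.inf hqθ)))).not
  · intro t
    rw [int_key t]
    rw [BoundedFormula.realize_alls]
    have hrealize : ∀ xs : Fin (4 + 4 * k) → ℚ,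
        (φ0 ⊓ (φ1 ⊓ (φ2 ⊓ (φ3 ⊓ θ)))).Realize (fun _ => t) xs ↔
        (ψ.Realize (fun _ => xs ⟨0, by omega⟩) (fun j => xs ⟨4 + (j : ℕ), by omega⟩) ∧
         ψ.Realize (fun _ => xs ⟨1, by omega⟩) (fun j => xs ⟨4 + k + (j : ℕ), by omega⟩) ∧
         ψ.Realize (fun _ => xs ⟨2, by omega⟩) (fun j => xs ⟨4 + 2 * k + (j : ℕ), by omega⟩) ∧
         ψ.Realize (fun _ => xs ⟨3, by omega⟩) (fun j => xs ⟨4 + 3 * k + (j : ℕ), by omega⟩)) ∧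
        (xs ⟨2, by omega⟩ * xs ⟨0, by omega⟩ + xs ⟨3, by omega⟩ * xs ⟨1, by omega⟩ = 1 ∧
         xs ⟨0, by omega⟩ = t * xs ⟨1, by omega⟩ ∧
         xs ⟨1, by omega⟩ ≠ 0 ∧ xs ⟨1, by omega⟩ ≠ 1 ∧ xs ⟨1, by omega⟩ ≠ -1) := by
      intro xs
      have e0 : φ0.Realize (fun _ => t) xs ↔
          ψ.Realize (fun _ => xs ⟨0, by omega⟩) (fun j => xs ⟨4 + (j : ℕ), by omega⟩) := by
        rw [BoundedFormula.realize_castLE_of_isQF h0 (hQF.relabel _),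
          BoundedFormula.realize_relabel]
        exact Iff.rfl
      have e1 : φ1.Realize (fun _ => t) xs ↔
          ψ.Realize (fun _ => xs ⟨1, by omega⟩) (fun j => xs ⟨4 + k + (j : ℕ), by omega⟩) := by
        rw [BoundedFormula.realize_castLE_of_isQF h1 (hQF.relabel _),
          BoundedFormula.realize_relabel]
        exact Iff.rfl
      have e2 : φ2.Realize (fun _ => t) xs ↔
          ψ.Realize (fun _ => xs ⟨2, by omega⟩) (fun j => xs ⟨4 + 2 * k + (j : ℕ), by omega⟩) := by
        rw [BoundedFormula.realize_castLE_of_isQF h2 (hQF.relabel _),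
          BoundedFormula.realize_relabel]
        exact Iff.rfl
      have e3 : φ3.Realize (fun _ => t) xs ↔
          ψ.Realize (fun _ => xs ⟨3, by omega⟩) (fun j => xs ⟨4 + 3 * k + (j : ℕ), by omega⟩) := by
        rw [BoundedFormula.realize_castLE_of_isQF h3 (hQF.relabel _),
          BoundedFormula.realize_relabel]
        exact Iff.rfl
      have eθ : θ.Realize (fun _ => t) xs ↔
          (xs ⟨2, by omega⟩ * xs ⟨0, by omega⟩ + xs ⟨3, by omega⟩ * xs ⟨1, by omega⟩ = 1 ∧
           xs ⟨0, by omega⟩ = t * xs ⟨1, by omega⟩ ∧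
           xs ⟨1, by omega⟩ ≠ 0 ∧ xs ⟨1, by omega⟩ ≠ 1 ∧ xs ⟨1, by omega⟩ ≠ -1) := by
        simp only [θ, tv, mv, nv, av, bv, BoundedFormula.realize_inf,
          BoundedFormula.realize_not, BoundedFormula.realize_bdEqual,
          Ring.realize_add, Ring.realize_mul, Ring.realize_neg, Ring.realize_one,
          Ring.realize_zero, Term.realize_var, Sum.elim_inl, Sum.elim_inr]
      simp only [BoundedFormula.realize_inf, e0, e1, e2, e3, eθ]
      tauto
    simp only [BoundedFormula.realize_not, hrealize]
    constructor
    · intro hni xs hcon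
      apply hni
      obtain ⟨⟨r0, r1, r2, r3⟩, hp⟩ := hcon
      exact ⟨xs ⟨0, by omega⟩, xs ⟨1, by omega⟩, xs ⟨2, by omega⟩, xs ⟨3, by omega⟩,
        (hInt _).mpr ⟨_, r0⟩, (hInt _).mpr ⟨_, r1⟩, (hInt _).mpr ⟨_, r2⟩, (hInt _).mpr ⟨_, r3⟩,
        hp.1, hp.2.1, hp.2.2.1, hp.2.2.2.1, hp.2.2.2.2⟩
    · rintro hall ⟨m, n, a, b, im, inn, ia, ib, hp1, hp2, hp3, hp4, hp5⟩
      obtain ⟨w0, hw0⟩ := (hInt m).mp im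
      obtain ⟨w1, hw1⟩ := (hInt n).mp inn
      obtain ⟨w2, hw2⟩ := (hInt a).mp ia
      obtain ⟨w3, hw3⟩ := (hInt b).mp ib
      set xs : Fin (4 + 4 * k) → ℚ := mkAssign m n a b w0 w1 w2 w3 with hxs
      have v0 : xs ⟨0, by omega⟩ = m := by simp [hxs, mkAssign]
      have v1 : xs ⟨1, by omega⟩ = n := by simp [hxs, mkAssign]
      have v2 : xs ⟨2, by omega⟩ = a := by simp [hxs, mkAssign]
      have v3 : xs ⟨3, by omega⟩ = b := by simp [hxs, mkAssign]
      have bl0 : (fun j : Fin k => xs ⟨4 + (j : ℕ), by omega⟩) = w0 := by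
        funext j
        have hj := j.isLt
        simp only [hxs, mkAssign]
        rw [dif_neg (by omega), dif_neg (by omega), dif_neg (by omega), dif_neg (by omega),
          dif_pos (by omega)]
        exact congrArg w0 (Fin.ext (by simp only [Fin.val_mk]; omega))
      have bl1 : (fun j : Fin k => xs ⟨4 + k + (j : ℕ), by omega⟩) = w1 := by
        funext j
        have hj := j.isLt
        simp only [hxs, mkAssign]
        rw [dif_neg (by omega), dif_neg (by omega), dif_neg (by omega), dif_neg (by omega),
          dif_neg (by omega), dif_pos (by omega)]
        exact congrArg w1 (Fin.ext (by simp only [Fin.val_mk]; omega))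
      have bl2 : (fun j : Fin k => xs ⟨4 + 2 * k + (j : ℕ), by omega⟩) = w2 := by
        funext j
        have hj := j.isLt
        simp only [hxs, mkAssign]
        rw [dif_neg (by omega), dif_neg (by omega), dif_neg (by omega), dif_neg (by omega),
          dif_neg (by omega), dif_neg (by omega), dif_pos (by omega)]
        exact congrArg w2 (Fin.ext (by simp only [Fin.val_mk]; omega))
      have bl3 : (fun j : Fin k => xs ⟨4 + 3 * k + (j : ℕ), by omega⟩) = w3 := by
        funext j
        have hj := j.isLt
        simp only [hxs, mkAssign]
        rw [dif_neg (by omega), dif_neg (by omega), dif_neg (by omega), dif_neg (by omega),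
          dif_neg (by omega), dif_neg (by omega), dif_neg (by omega)]
        exact congrArg w3 (Fin.ext (by simp only [Fin.val_mk]; omega))
      refine hall xs ⟨⟨?_, ?_, ?_, ?_⟩, ?_, ?_, ?_, ?_, ?_⟩
      · rw [bl0, v0]; exact hw0
      · rw [bl1, v1]; exact hw1
      · rw [bl2, v2]; exact hw2
      · rw [bl3, v3]; exact hw3
      · rw [v0, v1, v2, v3]; exact hp1
      · rw [v0, v1]; exact hp2
      · rw [v1]; exact hp3
      · rw [v1]; exact hp4
      · rw [v1]; exact hp5
end

section
/- Let p₁,...,pₙ be distinct primes ≡ 1 mod 8, q₁,...,q_s distinct primes ≡ 3 mod 8 (s odd, distinct from the pᵢ), and set p = p₁⋯pₙ. Suppose for each k ≤ s the number n_k := #{i ≤ n | (q_k/p_i) = −1} is odd. Then for any product q of q₁,...,q_s with some of p₁,...,pₘ (m ≤ n) and further distinct primes r₁,...,r_t ≡ 1 mod 8, at least one of the following holds: (1) there exists j ≤ m with s_j + t_j + n'_j odd; (2) there exists i with m < i ≤ n and s_i + m_i + t_i odd; (3) there exists l ≤ t with n*_l odd; where s_j = #{k ≤ s | (q_k/p_j)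 = −1}, t_j = #{l ≤ t | (r_l/p_j) = −1}, n'_j = #{i > m | (p_j/p_i) = −1}, m_i = #{j ≤ m | (p_j/p_i) = −1}, n*_l = #{i ≤ n | (r_l/p_i) = −1}. -/
/-- `a` is a quadratic non-residue modulo `p`. -/
def NR (a p : ℕ) : Prop := ¬ IsSquare ((a : ZMod p))

open Finset

/-- The combinatorial parity argument at the heart of Proposition 10:
`p 0, …, p (n-1)` are distinct primes `≡ 1 mod 8`, `q 0, …, q (s-1)` distinct primes
`≡ 3 mod 8` (`s` odd), `r 0, …, r (t-1)` further distinct primes `≡ 1 mod 8`, all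
families disjoint, `m ≤ n`, and each `n_k = #{i | (q k / p i) = -1}` is odd.  Then one
of the three listed parity conditions holds. -/
theorem parity_argument (n s t m : ℕ) (hm : m ≤ n) (hs : Odd s)
    (p : Fin n → ℕ) (q : Fin s → ℕ) (r : Fin t → ℕ)
    (hp : ∀ i, (p i).Prime ∧ p i % 8 = 1)
    (hq : ∀ k, (q k).Prime ∧ q k % 8 = 3)
    (hr : ∀ l, (r l).Prime ∧ r l % 8 = 1)
    (hpinj : Function.Injective p) (hqinj : Function.Injective q)
    (hrinj : Function.Injective r)
    (hpq : ∀ i k, p i ≠ q k) (hpr : ∀ i l, p i ≠ r l) (hqr : ∀ k l, q k ≠ r l)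
    (hodd : ∀ k : Fin s, Odd (Nat.card {i : Fin n // NR (q k) (p i)})) :
    (∃ j : Fin n, (j : ℕ) < m ∧
      Odd (Nat.card {k : Fin s // NR (q k) (p j)} +
        Nat.card {l : Fin t // NR (r l) (p j)} +
        Nat.card {i : Fin n // m ≤ (i : ℕ) ∧ NR (p j) (p i)})) ∨
    (∃ i : Fin n, m ≤ (i : ℕ) ∧
      Odd (Nat.card {k : Fin s // NR (q k) (p i)} +
        Nat.card {j : Fin n // (j : ℕ) < m ∧ NR (p j) (p i)} +
        Nat.card {l : Fin t // NR (r l) (p i)})) ∨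
    (∃ l : Fin t, Odd (Nat.card {i : Fin n // NR (r l) (p i)})) := by
  classical
  by_contra hcon
  push_neg at hcon
  obtain ⟨h1, h2, h3⟩ := hcon
  have key : ∀ {α : Type} [Fintype α] (P : α → Prop) [DecidablePred P],
      Nat.card {x // P x} = ∑ x, if P x then 1 else 0 := by
    intro α _ P _
    rw [Nat.card_eq_fintype_card, Fintype.card_subtype, Finset.card_filter]
  simp only [key, Nat.not_odd_iff_even, Nat.even_iff, Nat.odd_iff] at h1 h2 h3 hodd
  set a : Fin n → ℕ := fun i => ∑ k : Fin s, if NR (q k) (p i) then 1 else 0 with ha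
  set b : Fin n → ℕ := fun i => ∑ l : Fin t, if NR (r l) (p i) then 1 else 0 with hb
  set c : Fin n → ℕ := fun j => ∑ i : Fin n, if m ≤ (i : ℕ) ∧ NR (p j) (p i) then 1 else 0 with hc
  set d : Fin n → ℕ := fun i => ∑ j : Fin n, if (j : ℕ) < m ∧ NR (p j) (p i) then 1 else 0 with hd
  have h1' : ∀ j : Fin n, (j : ℕ) < m → (a j + b j + c j) % 2 = 0 := by
    intro j hj
    have := h1 j hj
    simp only [ha, hb, hc]
    omega
  have h2' : ∀ i : Fin n, ¬ (i : ℕ) < m → (a i + d i + b i) % 2 = 0 := by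
    intro i hi
    have := h2 i (not_lt.mp hi)
    simp only [ha, hb, hd]
    omega
  have hA : (∑ i : Fin n, a i) % 2 = 1 := by
    rw [ha]
    rw [Finset.sum_comm, Finset.sum_nat_mod]
    simp only [hodd]
    simp [Nat.odd_iff.mp hs]
  have hB : (∑ i : Fin n, b i) % 2 = 0 := by
    have h3' : ∀ l : Fin t, (∑ x : Fin n, if NR (r l) (p x) then 1 else 0) % 2 = 0 := by
      intro l; have := h3 l; omega
    rw [hb]
    rw [Finset.sum_comm, Finset.sum_nat_mod]
    simp only [h3']
    simp
  have push : ∀ (cnd : Prop) [Decidable cnd] (f : Fin n → ℕ),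
      (if cnd then ∑ i : Fin n, f i else 0) = ∑ i : Fin n, if cnd then f i else 0 := by
    intro cnd _ f; split <;> simp
  have hC : (∑ j ∈ univ.filter (fun j : Fin n => (j : ℕ) < m), c j)
      = ∑ i ∈ univ.filter (fun i : Fin n => ¬ (i : ℕ) < m), d i := by
    rw [Finset.sum_filter, Finset.sum_filter]
    simp only [hc, hd, push]
    rw [Finset.sum_comm]
    refine Finset.sum_congr rfl fun i _ => Finset.sum_congr rfl fun j _ => ?_
    by_cases hj : (j : ℕ) < m <;> by_cases hi : m ≤ (i : ℕ) <;>
      by_cases hP : NR (p j) (p i) <;> simp [hj, hi, hP, not_lt] <;> omega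
  have e1 : (∑ j ∈ univ.filter (fun j : Fin n => (j : ℕ) < m), (a j + b j + c j)) % 2 = 0 := by
    rw [Finset.sum_nat_mod]
    rw [Finset.sum_congr rfl (fun j hj => h1' j (Finset.mem_filter.mp hj).2)]
    simp
  have e2 : (∑ i ∈ univ.filter (fun i : Fin n => ¬ (i : ℕ) < m), (a i + d i + b i)) % 2 = 0 := by
    rw [Finset.sum_nat_mod]
    rw [Finset.sum_congr rfl (fun i hi => h2' i (Finset.mem_filter.mp hi).2)]
    simp
  rw [Finset.sum_add_distrib, Finset.sum_add_distrib] at e1 e2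
  have sA := Finset.sum_filter_add_sum_filter_not Finset.univ (fun i : Fin n => (i : ℕ) < m) a
  have sB := Finset.sum_filter_add_sum_filter_not Finset.univ (fun i : Fin n => (i : ℕ) < m) b
  omega
end

section
/- Let R = ⋂_{l ∈ Δ} ℤ_{(l)} for a finite nonempty set Δ of primes, let J(R) be its Jacobson radical, and define R̃ = {x ∈ ℚ | ¬∃y ∈ J(R), xy = 1}. Then R̃ = ⋃_{l ∈ Δ} ℤ_{(l)}. In particular, if R = ℤ_{(p)} for a single prime p, then R̃ = R. -/
/-- The semilocal subring `R = ⋂_{l ∈ Δ} ℤ_{(l)}` of ℚ, for a finite set `Δ` of primes. -/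
def locSubring (Δ : Finset ℕ) (hΔ : ∀ l ∈ Δ, l.Prime) : Subring ℚ where
  carrier := {x : ℚ | ∀ l ∈ Δ, ¬ (l ∣ x.den)}
  one_mem' := by
    intro l hl h
    rw [Rat.den_one, Nat.dvd_one] at h
    exact (hΔ l hl).one_lt.ne' h
  zero_mem' := by
    intro l hl h
    rw [Rat.den_zero, Nat.dvd_one] at h
    exact (hΔ l hl).one_lt.ne' h
  mul_mem' := by
    intro a b ha hb l hl h
    rcases ((hΔ l hl).dvd_mul).mp (h.trans (Rat.mul_den_dvd a b)) with h' | h'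
    · exact ha l hl h'
    · exact hb l hl h'
  add_mem' := by
    intro a b ha hb l hl h
    rcases ((hΔ l hl).dvd_mul).mp (h.trans (Rat.add_den_dvd a b)) with h' | h'
    · exact ha l hl h'
    · exact hb l hl h'
  neg_mem' := by
    intro a ha l hl h
    rw [Rat.den_neg_eq_den] at h
    exact ha l hl h

/-- The Jacobson radical of `R = ⋂_{l ∈ Δ} ℤ_{(l)}`, viewed as a subset of ℚ. -/
def Jset (Δ : Finset ℕ) (hΔ : ∀ l ∈ Δ, l.Prime) : Set ℚ :=
  {x : ℚ | ∃ h : x ∈ locSubring Δ hΔ,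
    (⟨x, h⟩ : locSubring Δ hΔ) ∈ Ideal.jacobson (⊥ : Ideal (locSubring Δ hΔ))}

lemma num_eq (a : ℚ) : (a.num : ℚ) = a * (a.den : ℚ) := by
  rw [Rat.mul_den_eq_num]

lemma cross_mul (a b : ℚ) : (a*b).num * ((a.den : ℤ) * (b.den : ℤ)) = a.num * b.num * ((a*b).den : ℤ) := by
  have h : ((a*b).num : ℚ) * ((a.den : ℚ) * (b.den : ℚ)) = (a.num : ℚ) * b.num * ((a*b).den : ℚ) := by
    rw [num_eq (a*b), num_eq a, num_eq b]; ring
  exact_mod_cast h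

lemma cross_add (a b : ℚ) : (a+b).num * ((a.den : ℤ) * (b.den : ℤ)) = (a.num * b.den + b.num * a.den) * ((a+b).den : ℤ) := by
  have h : ((a+b).num : ℚ) * ((a.den : ℚ) * (b.den : ℚ)) = ((a.num : ℚ) * b.den + (b.num : ℚ) * a.den) * ((a+b).den : ℚ) := by
    rw [num_eq (a+b), num_eq a, num_eq b]; ring
  exact_mod_cast h

lemma not_dvd_both {l : ℕ} (hl : l.Prime) {x : ℚ} (h1 : (l:ℤ) ∣ x.num) (h2 : l ∣ x.den) : False := by
  have h1' : l ∣ x.num.natAbs := by rwa [Int.natCast_dvd] at h1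
  have := Nat.dvd_gcd h1' h2
  rw [Nat.Coprime.gcd_eq_one x.reduced] at this
  exact hl.one_lt.ne' (Nat.eq_one_of_dvd_one this)

lemma den_rel {x y : ℚ} (h : x * y = 1) : (x.den : ℤ) * (y.den : ℤ) = x.num * y.num := by
  have := cross_mul x y
  rw [h] at this
  simpa using this

lemma locSubring_isUnit_iff (Δ : Finset ℕ) (hΔ : ∀ l ∈ Δ, l.Prime) (hne : Δ.Nonempty)
    (u : locSubring Δ hΔ) :
    IsUnit u ↔ ∀ l ∈ Δ, ¬ (l:ℤ) ∣ (u : ℚ).num := by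
  constructor
  · rintro hu l hl hdvd
    obtain ⟨v, hv⟩ := isUnit_iff_exists_inv.mp hu
    have hv1 : (u : ℚ) * (v : ℚ) = 1 := by exact_mod_cast congrArg Subtype.val hv
    have hrel := den_rel hv1
    have hd : (l:ℤ) ∣ ((u:ℚ).den : ℤ) * ((v:ℚ).den : ℤ) := by
      rw [hrel]; exact hdvd.mul_right _
    have hp : Prime (l:ℤ) := Nat.prime_iff_prime_int.mp (hΔ l hl)
    rcases hp.dvd_mul.mp hd with h | h
    · exact u.2 l hl (by exact_mod_cast h)
    · exact v.2 l hl (by exact_mod_cast h)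
  · intro hnum
    obtain ⟨l₀, hl₀⟩ := hne
    have hu0 : (u : ℚ) ≠ 0 := by
      intro h0
      exact hnum l₀ hl₀ (by rw [h0]; simp)
    have hv1 : (u : ℚ) * (u : ℚ)⁻¹ = 1 := mul_inv_cancel₀ hu0
    have hrel := den_rel hv1
    have hvmem : ((u:ℚ)⁻¹ : ℚ) ∈ locSubring Δ hΔ := by
      intro l hl hden
      have hp : Prime (l:ℤ) := Nat.prime_iff_prime_int.mp (hΔ l hl)
      have hd : (l:ℤ) ∣ (u:ℚ).num * ((u:ℚ)⁻¹).num := by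
        rw [← hrel]
        exact Dvd.dvd.mul_left (by exact_mod_cast hden) _
      rcases hp.dvd_mul.mp hd with h | h
      · exact hnum l hl h
      · exact not_dvd_both (hΔ l hl) h hden
    exact isUnit_iff_exists_inv.mpr ⟨⟨_, hvmem⟩, Subtype.ext (by push_cast; exact hv1)⟩

lemma mem_jacobson_iff (Δ : Finset ℕ) (hΔ : ∀ l ∈ Δ, l.Prime) (hne : Δ.Nonempty)
    {x : ℚ} (hx : x ∈ locSubring Δ hΔ) :
    (⟨x, hx⟩ : locSubring Δ hΔ) ∈ Ideal.jacobson (⊥ : Ideal (locSubring Δ hΔ)) ↔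
      ∀ l ∈ Δ, (l:ℤ) ∣ x.num := by
  rw [Ideal.mem_jacobson_bot]
  constructor
  · intro H l hl
    by_contra hnd
    haveI : Fact l.Prime := ⟨hΔ l hl⟩
    have hxnum : ((x.num : ℤ) : ZMod l) ≠ 0 := by
      rwa [Ne, ZMod.intCast_zmod_eq_zero_iff_dvd]
    have hxden : ((x.den : ℤ) : ZMod l) ≠ 0 := by
      rw [Ne, ZMod.intCast_zmod_eq_zero_iff_dvd]
      intro h
      exact hx l hl (by exact_mod_cast h)
    set c : ℤ := ((((x.den : ℤ) : ZMod l) * ((x.num : ℤ) : ZMod l)⁻¹).val : ℤ) with hcdef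
    have hcc : ((c : ℤ) : ZMod l) = ((x.den : ℤ) : ZMod l) * ((x.num : ℤ) : ZMod l)⁻¹ := by
      rw [hcdef]
      push_cast
      simp [ZMod.natCast_val, ZMod.cast_id]
    have hc : ((x.num : ℤ) : ZMod l) * ((c : ℤ) : ZMod l) = ((x.den : ℤ) : ZMod l) := by
      rw [hcc]
      field_simp
    have hcmem : (-(c : ℚ)) ∈ locSubring Δ hΔ := by
      intro l' hl' hd
      rw [Rat.den_neg_eq_den, Rat.den_intCast] at hd
      exact (hΔ l' hl').one_lt.ne' (Nat.eq_one_of_dvd_one hd)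
    have hu := H ⟨(-(c : ℚ)), hcmem⟩
    have hw := (locSubring_isUnit_iff Δ hΔ hne _).mp hu l hl
    apply hw
    have hcoe : ((((⟨x, hx⟩ : locSubring Δ hΔ) * ⟨(-(c : ℚ)), hcmem⟩ + 1) : locSubring Δ hΔ) : ℚ)
        = x * (-(c : ℚ)) + 1 := rfl
    rw [hcoe]
    -- now show (l:ℤ) ∣ (x * (-c:ℚ) + 1).num
    set a : ℚ := x * (-(c : ℚ)) with hadef
    have hamem : a ∈ locSubring Δ hΔ := (locSubring Δ hΔ).mul_mem hx hcmem
    have haden : ((a.den : ℤ) : ZMod l) ≠ 0 := by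
      rw [Ne, ZMod.intCast_zmod_eq_zero_iff_dvd]
      intro h
      exact hamem l hl (by exact_mod_cast h)
    have eq1 := cross_mul x (-(c : ℚ))
    simp only [Rat.num_neg_eq_neg_num, Rat.den_neg_eq_den, Rat.num_intCast, Rat.den_intCast,
      Nat.cast_one, mul_one] at eq1
    have eq2 := cross_add a 1
    rw [Rat.num_one, Rat.den_one] at eq2
    simp only [Nat.cast_one, mul_one, one_mul] at eq2
    rw [← ZMod.intCast_zmod_eq_zero_iff_dvd]
    have e1 : ((a.num : ℤ) : ZMod l) * ((x.den : ℤ) : ZMod l) = - (((x.den : ℤ) : ZMod l) * ((a.den : ℤ) : ZMod l)) := by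
      have h0 := congrArg (fun t : ℤ => (t : ZMod l)) eq1
      simp only [Int.cast_mul, Int.cast_neg] at h0
      rw [show ((x.num : ℤ) : ZMod l) * (-((c : ℤ) : ZMod l)) * ((a.den : ℤ) : ZMod l)
            = -(((x.num : ℤ) : ZMod l) * ((c : ℤ) : ZMod l) * ((a.den : ℤ) : ZMod l)) by ring, hc] at h0
      exact h0
    have e1' : ((a.num : ℤ) : ZMod l) = - ((a.den : ℤ) : ZMod l) := by
      have := mul_right_cancel₀ hxden (by rw [e1]; ring : ((a.num : ℤ) : ZMod l) * ((x.den : ℤ) : ZMod l) = (- ((a.den : ℤ) : ZMod l)) * ((x.den : ℤ) : ZMod l))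
      exact this
    have e2 : (((a+1).num : ℤ) : ZMod l) * ((a.den : ℤ) : ZMod l) = 0 := by
      have h0 := congrArg (fun t : ℤ => (t : ZMod l)) eq2
      simp only [Int.cast_mul, Int.cast_add] at h0
      rw [e1'] at h0
      simpa using h0
    have := (mul_eq_zero.mp e2).resolve_right haden
    exact this
  · intro hdvd y
    rw [locSubring_isUnit_iff Δ hΔ hne]
    intro l hl hdw
    have hp : Prime (l:ℤ) := Nat.prime_iff_prime_int.mp (hΔ l hl)
    have hcoe : (((⟨x, hx⟩ * y + 1) : locSubring Δ hΔ) : ℚ) = x * (y : ℚ) + 1 := rfl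
    rw [hcoe] at hdw
    set a : ℚ := x * (y : ℚ) with hadef
    have hamem : a ∈ locSubring Δ hΔ := (locSubring Δ hΔ).mul_mem hx y.2
    have hwmem : a + 1 ∈ locSubring Δ hΔ := (locSubring Δ hΔ).add_mem hamem (locSubring Δ hΔ).one_mem
    have hanum : (l:ℤ) ∣ a.num := by
      have eq1 := cross_mul x (y : ℚ)
      have : (l:ℤ) ∣ a.num * ((x.den : ℤ) * ((y:ℚ).den : ℤ)) := by
        rw [hadef, eq1]
        exact ((hdvd l hl).mul_right _).mul_right _
      rcases hp.dvd_mul.mp this with h | h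
      · exact h
      · rcases hp.dvd_mul.mp h with h' | h'
        · exact absurd (by exact_mod_cast h') (hx l hl)
        · exact absurd (by exact_mod_cast h') (y.2 l hl)
    have eq2 := cross_add a 1
    rw [Rat.num_one, Rat.den_one] at eq2
    simp only [Nat.cast_one, mul_one, one_mul] at eq2
    have hda : (l:ℤ) ∣ (a.num + (a.den : ℤ)) * ((a+1).den : ℤ) := by
      rw [← eq2]
      exact hdw.mul_right _
    rcases hp.dvd_mul.mp hda with h | h
    · have hden : (l:ℤ) ∣ (a.den : ℤ) := by
        have := dvd_sub h hanum
        simpa using this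
      exact hamem l hl (by exact_mod_cast hden)
    · exact hwmem l hl (by exact_mod_cast h)

lemma Jset_iff (Δ : Finset ℕ) (hΔ : ∀ l ∈ Δ, l.Prime) (hne : Δ.Nonempty) (x : ℚ) :
    x ∈ Jset Δ hΔ ↔ (∀ l ∈ Δ, ¬ l ∣ x.den) ∧ ∀ l ∈ Δ, (l:ℤ) ∣ x.num := by
  constructor
  · rintro ⟨h, hj⟩; exact ⟨h, (mem_jacobson_iff Δ hΔ hne h).mp hj⟩
  · rintro ⟨h, hn⟩; exact ⟨h, (mem_jacobson_iff Δ hΔ hne h).mpr hn⟩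

lemma main_lemma (Δ : Finset ℕ) (hΔ : ∀ l ∈ Δ, l.Prime) (hne : Δ.Nonempty) :
    {x : ℚ | ¬ ∃ y ∈ Jset Δ hΔ, x * y = 1} = {x : ℚ | ∃ l ∈ Δ, ¬ (l ∣ x.den)} := by
  ext x
  simp only [Set.mem_setOf_eq]
  constructor
  · intro hnex
    by_contra hall
    push_neg at hall
    apply hnex
    obtain ⟨l₀, hl₀⟩ := hne
    have hx0 : x ≠ 0 := by
      intro h
      rw [h, Rat.den_zero] at hall
      exact (hΔ l₀ hl₀).one_lt.ne' (Nat.eq_one_of_dvd_one (hall l₀ hl₀))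
    have hxy : x * x⁻¹ = 1 := mul_inv_cancel₀ hx0
    refine ⟨x⁻¹, ?_, hxy⟩
    rw [Jset_iff Δ hΔ ⟨l₀, hl₀⟩]
    have hrel := den_rel hxy
    constructor
    · intro l hl hden
      have hp : Prime (l:ℤ) := Nat.prime_iff_prime_int.mp (hΔ l hl)
      have hd : (l:ℤ) ∣ x.num * (x⁻¹).num := by
        rw [← hrel]
        exact Dvd.dvd.mul_left (by exact_mod_cast hden) _
      rcases hp.dvd_mul.mp hd with h | h
      · exact not_dvd_both (hΔ l hl) h (hall l hl)
      · exact not_dvd_both (hΔ l hl) h hden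
    · intro l hl
      have hp : Prime (l:ℤ) := Nat.prime_iff_prime_int.mp (hΔ l hl)
      have hd : (l:ℤ) ∣ x.num * (x⁻¹).num := by
        rw [← hrel]
        exact Dvd.dvd.mul_right (by exact_mod_cast (hall l hl)) _
      rcases hp.dvd_mul.mp hd with h | h
      · exact absurd h (fun h => not_dvd_both (hΔ l hl) h (hall l hl))
      · exact h
  · rintro ⟨l, hl, hden⟩ ⟨y, hy, hxy⟩
    rw [Jset_iff Δ hΔ hne] at hy
    have hrel := den_rel hxy
    have hp : Prime (l:ℤ) := Nat.prime_iff_prime_int.mp (hΔ l hl)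
    have hd : (l:ℤ) ∣ (x.den : ℤ) * (y.den : ℤ) := by
      rw [hrel]
      exact (hy.2 l hl).mul_left _
    rcases hp.dvd_mul.mp hd with h | h
    · exact hden (by exact_mod_cast h)
    · exact hy.1 l hl (by exact_mod_cast h)

/-- For `R = ⋂_{l ∈ Δ} ℤ_{(l)}` (`Δ` finite nonempty) and
`R̃ = {x ∈ ℚ | ¬∃ y ∈ J(R), xy = 1}`, one has `R̃ = ⋃_{l ∈ Δ} ℤ_{(l)}`; in particular
for `Δ = {p}` a single prime, `R̃ = R = ℤ_{(p)}`. -/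
theorem Rtilde_eq_union (Δ : Finset ℕ) (hΔ : ∀ l ∈ Δ, l.Prime) (hne : Δ.Nonempty) :
    ({x : ℚ | ¬ ∃ y ∈ Jset Δ hΔ, x * y = 1} = {x : ℚ | ∃ l ∈ Δ, ¬ (l ∣ x.den)}) ∧
    (∀ (p : ℕ) (hp : p.Prime),
      {x : ℚ | ¬ ∃ y ∈ Jset {p} (by simpa using hp), x * y = 1} =
        {x : ℚ | ¬ (p ∣ x.den)}) := by
  refine ⟨main_lemma Δ hΔ hne, fun p hp => ?_⟩
  rw [main_lemma {p} (by simpa using hp) ⟨p, Finset.mem_singleton_self p⟩]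
  ext x
  simp
end

section
/- For every pair (a,b) from the list {(2,3),(2,5),(2,6),(2,10),(3,3),(3,10),(3,15),(5,6),(5,10),(5,30),(6,6),(6,15),(10,30),(15,15),(15,30),(30,30)}, one has 4 + 8ℤ₂ ⊆ S_{a,b}(ℚ₂), where S_{a,b}(ℚ₂) = {2x₁ ∈ ℚ₂ | ∃x₂,x₃,x₄ ∈ ℚ₂ : x₁² − ax₂² − bx₃² + abx₄² = 1}. -/
/-- `S_{a,b}(ℚ₂)`: the set of traces of norm-one elements of `H_{a,b}` over `ℚ₂`. -/
def SsetQ2 (a b : ℚ_[2]) : Set ℚ_[2] :=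
  {y : ℚ_[2] | ∃ x₁ x₂ x₃ x₄ : ℚ_[2], y = 2 * x₁ ∧
    x₁ ^ 2 - a * x₂ ^ 2 - b * x₃ ^ 2 + a * b * x₄ ^ 2 = 1}

set_option maxHeartbeats 1000000 in
/-- Every element of `1 + 8ℤ₂` is a square in `ℤ₂`. -/
lemma sq_of_one_add_eight (w : ℤ_[2]) : ∃ s : ℤ_[2], s ^ 2 = 1 + 8 * w := by
  set F : Polynomial ℤ_[2] := Polynomial.X ^ 2 - Polynomial.C (1 + 8 * w) with hF
  have heval : F.eval 1 = -(8 * w) := by simp [hF]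
  have hderiv : F.derivative.eval 1 = 2 := by
    simp [hF, Polynomial.derivative_sub, Polynomial.derivative_pow]
  have h2 : ‖(2 : ℤ_[2])‖ = 2⁻¹ := by
    have := @PadicInt.norm_p 2 ⟨Nat.prime_two⟩
    simpa using this
  have hnorm : ‖F.eval 1‖ < ‖F.derivative.eval 1‖ ^ 2 := by
    rw [heval, hderiv, norm_neg, h2]
    have h8 : (8 : ℤ_[2]) = 2 ^ 3 := by norm_num
    calc ‖(8 : ℤ_[2]) * w‖ = ‖(8 : ℤ_[2])‖ * ‖w‖ := norm_mul _ _
      _ ≤ ‖(8 : ℤ_[2])‖ * 1 := by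
          exact mul_le_mul_of_nonneg_left (PadicInt.norm_le_one w) (norm_nonneg _)
      _ = (2 : ℝ)⁻¹ ^ 3 := by rw [mul_one, h8, norm_pow _ _, h2]
      _ < (2 : ℝ)⁻¹ ^ 2 := by norm_num
  obtain ⟨s, hs, -⟩ := hensels_lemma hnorm
  refine ⟨s, ?_⟩
  have : s ^ 2 - (1 + 8 * w) = 0 := by simpa [hF] using hs
  linear_combination this

/-- Key lemma: if `-3` is represented by `-a x² - b y² + a b t²`, then `4 + 8ℤ₂ ⊆ S`. -/
lemma key (a b r₂ r₃ r₄ : ℚ_[2])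
    (h : -(a * r₂ ^ 2) - b * r₃ ^ 2 + a * b * r₄ ^ 2 = -3) (z : ℤ_[2]) :
    (4 + 8 * (z : ℚ_[2])) ∈ SsetQ2 a b := by
  obtain ⟨u, hu⟩ : IsUnit (3 : ℤ_[2]) := by
    rw [PadicInt.isUnit_iff]
    have h3 : ((3 : ℤ) : ℤ_[2]) = (3 : ℤ_[2]) := by push_cast; ring
    have hnd : ¬ ‖((3 : ℤ) : ℤ_[2])‖ < 1 := by
      rw [PadicInt.norm_int_lt_one_iff_dvd]; decide
    rw [h3] at hnd
    exact le_antisymm (PadicInt.norm_le_one _) (not_lt.1 hnd)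
  set c : ℤ_[2] := ↑u⁻¹ with hc
  have hc3 : (3 : ℤ_[2]) * c = 1 := by
    rw [hc, ← hu]; exact u.mul_inv
  obtain ⟨s, hs⟩ := sq_of_one_add_eight (2 * (z + z ^ 2) * c)
  have hc3' : (3 : ℚ_[2]) * (c : ℚ_[2]) = 1 := by
    have := congrArg (fun x : ℤ_[2] => (x : ℚ_[2])) hc3
    push_cast at this; exact this
  have hs' : ((s : ℚ_[2])) ^ 2 =
      1 + 16 * ((z : ℚ_[2]) + (z : ℚ_[2]) ^ 2) * (c : ℚ_[2]) := by
    have := congrArg (fun x : ℤ_[2] => (x : ℚ_[2])) hs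
    push_cast [PadicInt.coe_mul, PadicInt.coe_add, PadicInt.coe_pow] at this
    have h8 : ((8 : ℤ_[2]) : ℚ_[2]) = 8 := by
      have : ((8 : ℤ_[2]) : ℚ_[2]) = (((8 : ℕ) : ℤ_[2]) : ℚ_[2]) := by norm_num
      rw [this, PadicInt.coe_natCast]; norm_num
    have h2' : ((2 : ℤ_[2]) : ℚ_[2]) = 2 := by
      have : ((2 : ℤ_[2]) : ℚ_[2]) = (((2 : ℕ) : ℤ_[2]) : ℚ_[2]) := by norm_num
      rw [this, PadicInt.coe_natCast]; norm_num
    rw [h8, h2'] at this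
    rw [this]; ring
  refine ⟨2 + 4 * (z : ℚ_[2]), r₂ * s, r₃ * s, r₄ * s, by ring, ?_⟩
  linear_combination ((s : ℚ_[2])) ^ 2 * h + (-3) * hs' +
    (-16 * ((z : ℚ_[2]) + (z : ℚ_[2]) ^ 2)) * hc3'

/-- For each of the sixteen listed pairs `(a,b)`, one has `4 + 8ℤ₂ ⊆ S_{a,b}(ℚ₂)`. -/
theorem four_add_eight_subset :
    ∀ ab ∈ ([(2, 3), (2, 5), (2, 6), (2, 10), (3, 3), (3, 10), (3, 15), (5, 6), (5, 10),
        (5, 30), (6, 6), (6, 15), (10, 30), (15, 15), (15, 30), (30, 30)] :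
        List (ℚ_[2] × ℚ_[2])),
      ∀ z : ℤ_[2], (4 + 8 * (z : ℚ_[2])) ∈ SsetQ2 ab.1 ab.2 := by
  intro ab hab
  fin_cases hab
  · exact key 2 3 0 3 2 (by norm_num)
  · exact key 2 5 2 1 1 (by norm_num)
  · exact key 2 6 0 5 (7/2) (by norm_num)
  · exact key 2 10 (1/2) (3/2) 1 (by norm_num)
  · exact key 3 3 0 2 1 (by norm_num)
  · exact key 3 10 1 0 0 (by norm_num)
  · exact key 3 15 1 0 0 (by norm_num)
  · exact key 5 6 (3/5) 1 (2/5) (by norm_num)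
  · exact key 5 10 1 4 (9/5) (by norm_num)
  · exact key 5 30 (3/5) (9/5) (4/5) (by norm_num)
  · exact key 6 6 (1/2) (5/2) 1 (by norm_num)
  · exact key 6 15 1 (17/5) (7/5) (by norm_num)
  · exact key 10 30 0 1 (3/10) (by norm_num)
  · exact key 15 15 (1/5) (8/5) (2/5) (by norm_num)
  · exact key 15 30 3 5 (7/5) (by norm_num)
  · exact key 30 30 (1/10) (33/10) (3/5) (by norm_num)
end
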